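/- arXiv:2009.04581 — 4 statements merged into one kernel-verified Lean document; each statement's English description precedes it below -/
import Mathlib

section
/- If x : ℝ → ℝ satisfies the logistic-type ODE x'(τ) = x(τ)(1 - x(τ))·g(τ) for a continuous function g, and x(0) ∈ (0,1), then x(τ) ∈ (0,1) for all τ ≥ 0. -/
theorem logistic_stays_in_unit_interval
    (x g : ℝ → ℝ) (hg : Continuous g)
    (hx : ∀ τ : ℝ, HasDerivAt x (x τ * (1 - x τ) * g τ) τ)
    (h0 : x 0 ∈ Set.Ioo (0 : ℝ) 1) :
    ∀ τ : ℝ, 0 ≤ τ → x τ ∈ Set.Ioo (0 : ℝ) 1 := by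
  have hxc : Continuous x := by
    have : Differentiable ℝ x := fun t => (hx t).differentiableAt
    exact this.continuous
  have h1c : Continuous fun s => (1 - x s) * g s := ((continuous_const.sub hxc).mul hg)
  have h2c : Continuous fun s => x s * g s := hxc.mul hg
  set u : ℝ → ℝ := fun t => ∫ s in (0:ℝ)..t, (1 - x s) * g s with hu
  set v : ℝ → ℝ := fun t => ∫ s in (0:ℝ)..t, x s * g s with hv
  have hud : ∀ t, HasDerivAt u ((1 - x t) * g t) t := fun t =>
    intervalIntegral.integral_hasDerivAt_right (h1c.intervalIntegrable 0 t)
      (h1c.stronglyMeasurableAtFilter _ _) h1c.continuousAt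
  have hvd : ∀ t, HasDerivAt v (x t * g t) t := fun t =>
    intervalIntegral.integral_hasDerivAt_right (h2c.intervalIntegrable 0 t)
      (h2c.stronglyMeasurableAtFilter _ _) h2c.continuousAt
  -- first constant: x t * exp (-u t)
  have hA : ∀ t, HasDerivAt (fun t => x t * Real.exp (-u t)) 0 t := by
    intro t
    have h1 : HasDerivAt (fun t => Real.exp (-u t)) (Real.exp (-u t) * (-((1 - x t) * g t))) t :=
      ((hud t).neg.exp)
    have : HasDerivAt (fun t => x t * Real.exp (-u t))
      (x t * (1 - x t) * g t * Real.exp (-u t) + x t * (Real.exp (-u t) * -((1 - x t) * g t))) t :=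
      (hx t).fun_mul h1
    convert this using 1
    ring
  have hAconst : ∀ t, x t * Real.exp (-u t) = x 0 * Real.exp (-u 0) := by
    intro t
    have := is_const_of_deriv_eq_zero (f := fun t => x t * Real.exp (-u t))
      (fun t => (hA t).differentiableAt) (fun t => (hA t).deriv) t 0
    exact this
  have hB : ∀ t, HasDerivAt (fun t => (1 - x t) * Real.exp (v t)) 0 t := by
    intro t
    have h1 : HasDerivAt (fun t => Real.exp (v t)) (Real.exp (v t) * (x t * g t)) t :=
      (hvd t).exp
    have h2 : HasDerivAt (fun t => 1 - x t) (-(x t * (1 - x t) * g t)) t :=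
      (hx t).const_sub 1
    have : HasDerivAt (fun t => (1 - x t) * Real.exp (v t))
      (-(x t * (1 - x t) * g t) * Real.exp (v t) + (1 - x t) * (Real.exp (v t) * (x t * g t))) t :=
      h2.fun_mul h1
    convert this using 1
    ring
  have hBconst : ∀ t, (1 - x t) * Real.exp (v t) = (1 - x 0) * Real.exp (v 0) := by
    intro t
    exact is_const_of_deriv_eq_zero (f := fun t => (1 - x t) * Real.exp (v t))
      (fun t => (hB t).differentiableAt) (fun t => (hB t).deriv) t 0
  have hu0 : u 0 = 0 := intervalIntegral.integral_same
  have hv0 : v 0 = 0 := intervalIntegral.integral_same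
  intro τ _
  constructor
  · have := hAconst τ
    rw [hu0, neg_zero, Real.exp_zero, mul_one] at this
    have hx0 : 0 < x 0 := h0.1
    nlinarith [Real.exp_pos (-u τ), this]
  · have := hBconst τ
    rw [hv0, Real.exp_zero, mul_one] at this
    have hx1 : x 0 < 1 := h0.2
    nlinarith [Real.exp_pos (v τ), this]
end

section
/- Let k > 1, R₀ > 0, a₀, a₁, a₂ > 0 with a₁ ≠ k·a₀, and define R_p = (a₁ - k·a₂)/(a₁ - k·a₀). If R₀ > R_p > 1, then the point with S̄ = 1/R_p, Ī = (1 - 1/R_p)/k, R̄ = (1 - 1/k)(1 - 1/R_p), x̄ = 1 - R_p/R₀ satisfies all four equilibrium equations of the behavioral SIR model, and moreover x̄ ∈ (0,1), S̄ ∈ (0,1), Ī ∈ (0,1). -/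
theorem P5_is_equilibrium (k R₀ a₀ a₁ a₂ : ℝ)
    (hk : 1 < k) (hR₀ : 0 < R₀)
    (ha₀ : 0 < a₀) (ha₁ : 0 < a₁) (ha₂ : 0 < a₂)
    (hne : a₁ ≠ k * a₀)
    (Rp : ℝ) (hRp : Rp = (a₁ - k * a₂) / (a₁ - k * a₀))
    (h1 : 1 < Rp) (h2 : Rp < R₀) :
    let S := 1 / Rp
    let I := (1 - 1 / Rp) / k
    let R := (1 - 1 / k) * (1 - 1 / Rp)
    let x := 1 - Rp / R₀
    (1 - (1 - x) * k * R₀ * S * I - S = 0) ∧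
    ((1 - x) * k * R₀ * S * I - k * I = 0) ∧
    ((k - 1) * I - R = 0) ∧
    (x * (1 - x) * (-a₀ + a₁ * I + a₂ * S) = 0) ∧
    x ∈ Set.Ioo (0 : ℝ) 1 ∧ S ∈ Set.Ioo (0 : ℝ) 1 ∧ I ∈ Set.Ioo (0 : ℝ) 1 := by
  have hRp0 : (0:ℝ) < Rp := lt_trans one_pos h1
  have hk0 : (0:ℝ) < k := lt_trans one_pos hk
  have hd : a₁ - k * a₀ ≠ 0 := sub_ne_zero.mpr hne
  have hkey : Rp * (a₁ - k * a₀) = a₁ - k * a₂ := by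
    rw [hRp]; field_simp
  intro S I R x
  refine ⟨?_, ?_, ?_, ?_, ?_, ?_, ?_⟩
  · show 1 - (1 - (1 - Rp / R₀)) * k * R₀ * (1/Rp) * ((1 - 1/Rp)/k) - 1/Rp = 0
    field_simp; ring
  · show (1 - (1 - Rp / R₀)) * k * R₀ * (1/Rp) * ((1 - 1/Rp)/k) - k * ((1 - 1/Rp)/k) = 0
    field_simp; ring
  · show (k - 1) * ((1 - 1/Rp)/k) - (1 - 1/k) * (1 - 1/Rp) = 0
    field_simp; ring
  · show (1 - Rp/R₀) * (1 - (1 - Rp/R₀)) * (-a₀ + a₁ * ((1 - 1/Rp)/k) + a₂ * (1/Rp)) = 0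
    have h3 : -a₀ + a₁ * ((1 - 1/Rp)/k) + a₂ * (1/Rp) = 0 := by
      have : a₁ * (Rp - 1) + k * a₂ = k * a₀ * Rp := by nlinarith [hkey]
      field_simp
      nlinarith [this]
    rw [h3, mul_zero]
  · constructor
    · have : Rp / R₀ < 1 := (div_lt_one hR₀).mpr h2
      simpa [x] using this
    · have : 0 < Rp / R₀ := div_pos hRp0 hR₀
      simp only [x]; linarith
  · constructor
    · exact div_pos one_pos hRp0
    · exact (div_lt_one hRp0).mpr h1
  · have h1S : 0 < 1 - 1/Rp := by
      have : 1/Rp < 1 := (div_lt_one hRp0).mpr h1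
      linarith
    constructor
    · exact div_pos h1S hk0
    · rw [div_lt_one hk0]
      nlinarith [one_div_pos.mpr hRp0]
end

section
/- Let k > 1, R₀ > 1. For any x̄ ∈ (0, (R₀-1)/R₀), the point with S̄ = 1/(R₀(1-x̄)), Ī = (1-S̄)/k, R̄ = (1-1/k)(1-S̄), together with x̄, satisfies the four equilibrium equations of the behavioral SIR model provided k·a₀ = a₁ = k·a₂. -/
theorem P6_is_equilibrium (k R₀ a₀ a₁ a₂ : ℝ)
    (hk : 1 < k) (hR₀ : 1 < R₀)
    (ha₀ : 0 < a₀) (ha₁ : 0 < a₁) (ha₂ : 0 < a₂)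
    (hdeg : k * a₀ = a₁ ∧ a₁ = k * a₂)
    (x : ℝ) (hx : x ∈ Set.Ioo (0 : ℝ) ((R₀ - 1) / R₀)) :
    let S := 1 / (R₀ * (1 - x))
    let I := (1 - S) / k
    let R := (1 - 1 / k) * (1 - S)
    (1 - (1 - x) * k * R₀ * S * I - S = 0) ∧
    ((1 - x) * k * R₀ * S * I - k * I = 0) ∧
    ((k - 1) * I - R = 0) ∧
    (x * (1 - x) * (-a₀ + a₁ * I + a₂ * S) = 0) := by
  obtain ⟨hd1, hd2⟩ := hdeg
  obtain ⟨hx0, hx1⟩ := hx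
  have hR0 : 0 < R₀ := by linarith
  have hlt1 : x < 1 := lt_of_lt_of_le hx1 (by
    rw [div_le_one hR0]; linarith)
  have h1x : 0 < 1 - x := by linarith
  have hk0 : (0:ℝ) < k := by linarith
  have hne : R₀ * (1 - x) ≠ 0 := by positivity
  have ha : a₀ = a₂ := by
    have : k * a₀ = k * a₂ := by rw [hd1, hd2]
    exact mul_left_cancel₀ hk0.ne' this
  refine ⟨?_, ?_, ?_, ?_⟩
  · field_simp
    ring
  · field_simp
    ring
  · field_simp
    ring
  · rw [ha, hd2]
    field_simp
    ring
end

section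
/- Suppose x : ℝ → ℝ and R : ℝ → ℝ are differentiable with x'(τ) = a₀·x(τ)(1-x(τ))·R'(τ) for all τ, where a₀ ∈ ℝ, and x(0) ∈ (0,1). Then there exists a constant C₁ > 0 such that x(τ) = e^{a₀R(τ)}/(e^{a₀R(τ)} + C₁) for all τ. -/
open Set

private lemma rep_r_deriv (a₀ : ℝ) (x R : ℝ → ℝ)
    (hx : Differentiable ℝ x) (hR : Differentiable ℝ R)
    (hode : ∀ τ : ℝ, deriv x τ = a₀ * x τ * (1 - x τ) * deriv R τ)
    {τ : ℝ} (hτ : x τ ≠ 0) :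
    HasDerivAt (fun t => (1 - x t) / x t * Real.exp (a₀ * R t)) 0 τ := by
  have hx' := (hx τ).hasDerivAt
  have hexp : HasDerivAt (fun t => Real.exp (a₀ * R t))
      (Real.exp (a₀ * R τ) * (a₀ * deriv R τ)) τ :=
    (Real.hasDerivAt_exp _).comp τ ((hR τ).hasDerivAt.const_mul a₀)
  have hdiv : HasDerivAt (fun t => (1 - x t) / x t)
      (((0 - deriv x τ) * x τ - (1 - x τ) * deriv x τ) / (x τ)^2) τ :=
    ((hasDerivAt_const τ (1:ℝ)).sub hx').div hx' hτ
  have h := hdiv.mul hexp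
  refine h.congr_deriv ?_
  rw [hode]
  field_simp
  ring

private lemma rep_q_deriv (a₀ : ℝ) (x R : ℝ → ℝ)
    (hx : Differentiable ℝ x) (hR : Differentiable ℝ R)
    (hode : ∀ τ : ℝ, deriv x τ = a₀ * x τ * (1 - x τ) * deriv R τ)
    {τ : ℝ} (hτ : 1 - x τ ≠ 0) :
    HasDerivAt (fun t => x t / (1 - x t) * Real.exp (-(a₀ * R t))) 0 τ := by
  have hx' := (hx τ).hasDerivAt
  have hexp : HasDerivAt (fun t => Real.exp (-(a₀ * R t)))
      (Real.exp (-(a₀ * R τ)) * (-(a₀ * deriv R τ))) τ :=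
    (Real.hasDerivAt_exp _).comp τ (((hR τ).hasDerivAt.const_mul a₀).neg)
  have hdiv : HasDerivAt (fun t => x t / (1 - x t))
      ((deriv x τ * (1 - x τ) - x τ * (0 - deriv x τ)) / (1 - x τ)^2) τ :=
    hx'.div ((hasDerivAt_const τ (1:ℝ)).sub hx') hτ
  have h := hdiv.mul hexp
  refine h.congr_deriv ?_
  rw [hode]
  field_simp
  ring

/-- Forward invariance of `(0,1)`. -/
private lemma rep_stays (a₀ : ℝ) (x R : ℝ → ℝ)
    (hx : Differentiable ℝ x) (hR : Differentiable ℝ R)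
    (hode : ∀ τ : ℝ, deriv x τ = a₀ * x τ * (1 - x τ) * deriv R τ)
    (h0 : x 0 ∈ Set.Ioo (0 : ℝ) 1) :
    ∀ τ : ℝ, 0 ≤ τ → x τ ∈ Set.Ioo (0 : ℝ) 1 := by
  by_contra hcon
  push_neg at hcon
  obtain ⟨τ₁, hτ₁, hxτ₁⟩ := hcon
  set S : Set ℝ := {t | 0 ≤ t ∧ x t ∉ Set.Ioo (0:ℝ) 1} with hS
  have hSclosed : IsClosed S := by
    have hrepr : S = Set.Ici (0:ℝ) ∩ x ⁻¹' (Set.Ioo (0:ℝ) 1)ᶜ := by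
      ext t; simp [hS, Set.mem_Ici]
    rw [hrepr]
    exact isClosed_Ici.inter (isOpen_Ioo.isClosed_compl.preimage hx.continuous)
  have hSne : S.Nonempty := ⟨τ₁, hτ₁, hxτ₁⟩
  have hSbdd : BddBelow S := ⟨0, fun t ht => ht.1⟩
  set s := sInf S with hs
  have hsmem : s ∈ S := hSclosed.csInf_mem hSne hSbdd
  have hbefore : ∀ t, 0 ≤ t → t < s → x t ∈ Set.Ioo (0:ℝ) 1 := by
    intro t ht hts
    by_contra hnot
    exact absurd (csInf_le hSbdd ⟨ht, hnot⟩) (not_le.2 hts)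
  have hs0 : 0 < s := by
    rcases lt_or_eq_of_le hsmem.1 with h | h
    · exact h
    · exact absurd h0 (h ▸ hsmem.2)
  -- x s ∈ Icc 0 1
  have hxs_closure : x s ∈ Set.Icc (0:ℝ) 1 := by
    have h1 : s ∈ closure (Set.Ico (0:ℝ) s) := by
      rw [closure_Ico hs0.ne]
      exact ⟨le_of_lt hs0, le_refl s⟩
    have h2 : x s ∈ closure (x '' Set.Ico (0:ℝ) s) :=
      (hx.continuous.continuousWithinAt).mem_closure_image h1
    have h3 : x '' Set.Ico (0:ℝ) s ⊆ Set.Ioo (0:ℝ) 1 := by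
      rintro _ ⟨t, ⟨ht0, hts⟩, rfl⟩
      exact hbefore t ht0 hts
    have := closure_mono h3 h2
    rwa [closure_Ioo one_ne_zero.symm] at this
  have hxs : x s = 0 ∨ x s = 1 := by
    rcases hxs_closure with ⟨hge, hle⟩
    rcases lt_or_eq_of_le hge with h | h
    · rcases lt_or_eq_of_le hle with h' | h'
      · exact absurd ⟨h, h'⟩ hsmem.2
      · exact Or.inr h'
    · exact Or.inl h.symm
  rcases hxs with hxs | hxs
  · -- x s = 0 : use q = x/(1-x) e^{-a₀R}, constant on [0,s], q 0 > 0, q s = 0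
    set q : ℝ → ℝ := fun t => x t / (1 - x t) * Real.exp (-(a₀ * R t)) with hq
    have hxlt : ∀ t ∈ Set.Icc (0:ℝ) s, 1 - x t ≠ 0 := by
      intro t ⟨ht0, hts⟩
      rcases lt_or_eq_of_le hts with h | h
      · exact ne_of_gt (by linarith [(hbefore t ht0 h).2])
      · rw [h, hxs]; norm_num
    have hqd : ∀ t ∈ Set.Icc (0:ℝ) s, HasDerivAt q 0 t := fun t ht =>
      rep_q_deriv a₀ x R hx hR hode (hxlt t ht)
    have hconst : ∀ t ∈ Set.Icc (0:ℝ) s, q t = q 0 := by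
      apply constant_of_has_deriv_right_zero
      · exact fun t ht => ((hqd t ht).continuousAt).continuousWithinAt
      · exact fun t ht => ((hqd t (Set.mem_Icc_of_Ico ht)).hasDerivWithinAt)
    have h1 : q s = q 0 := hconst s ⟨le_of_lt hs0, le_refl s⟩
    have h2 : q s = 0 := by simp [hq, hxs]
    have h3 : 0 < q 0 := by
      apply mul_pos
      · exact div_pos h0.1 (by linarith [h0.2])
      · exact Real.exp_pos _
    rw [h1] at h2; linarith
  · -- x s = 1 : use r = (1-x)/x e^{a₀R}
    set r : ℝ → ℝ := fun t => (1 - x t) / x t * Real.exp (a₀ * R t) with hr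
    have hxpos : ∀ t ∈ Set.Icc (0:ℝ) s, x t ≠ 0 := by
      intro t ⟨ht0, hts⟩
      rcases lt_or_eq_of_le hts with h | h
      · exact ne_of_gt (hbefore t ht0 h).1
      · rw [h, hxs]; norm_num
    have hrd : ∀ t ∈ Set.Icc (0:ℝ) s, HasDerivAt r 0 t := fun t ht =>
      rep_r_deriv a₀ x R hx hR hode (hxpos t ht)
    have hconst : ∀ t ∈ Set.Icc (0:ℝ) s, r t = r 0 := by
      apply constant_of_has_deriv_right_zero
      · exact fun t ht => ((hrd t ht).continuousAt).continuousWithinAt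
      · exact fun t ht => ((hrd t (Set.mem_Icc_of_Ico ht)).hasDerivWithinAt)
    have h1 : r s = r 0 := hconst s ⟨le_of_lt hs0, le_refl s⟩
    have h2 : r s = 0 := by simp [hr, hxs]
    have h3 : 0 < r 0 := by
      apply mul_pos
      · exact div_pos (by linarith [h0.2]) h0.1
      · exact Real.exp_pos _
    rw [h1] at h2; linarith

theorem replicator_explicit (a₀ : ℝ) (x R : ℝ → ℝ)
    (hx : Differentiable ℝ x) (hR : Differentiable ℝ R)
    (hode : ∀ τ : ℝ, deriv x τ = a₀ * x τ * (1 - x τ) * deriv R τ)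
    (h0 : x 0 ∈ Set.Ioo (0 : ℝ) 1) :
    ∃ C₁ : ℝ, 0 < C₁ ∧ ∀ τ : ℝ,
      x τ = Real.exp (a₀ * R τ) / (Real.exp (a₀ * R τ) + C₁) := by
  -- x stays in (0,1) for all time (forward & backward)
  have hpos : ∀ τ : ℝ, x τ ∈ Set.Ioo (0:ℝ) 1 := by
    intro τ
    rcases le_or_gt 0 τ with h | h
    · exact rep_stays a₀ x R hx hR hode h0 τ h
    · -- time reversal
      set y : ℝ → ℝ := fun t => x (-t) with hy
      set Q : ℝ → ℝ := fun t => R (-t) with hQ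
      have hyd : Differentiable ℝ y := hx.comp differentiable_neg
      have hQd : Differentiable ℝ Q := hR.comp differentiable_neg
      have hyderiv : ∀ t, deriv y t = -deriv x (-t) := by
        intro t
        have := ((hx (-t)).hasDerivAt.comp t (hasDerivAt_neg t)).deriv
        simpa [mul_comm, hy, Function.comp_def] using this
      have hQderiv : ∀ t, deriv Q t = -deriv R (-t) := by
        intro t
        have := ((hR (-t)).hasDerivAt.comp t (hasDerivAt_neg t)).deriv
        simpa [mul_comm, hQ, Function.comp_def] using this
      have hodey : ∀ t : ℝ, deriv y t = a₀ * y t * (1 - y t) * deriv Q t := by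
        intro t
        rw [hyderiv, hQderiv, hode]
        simp only [hy]
        ring
      have h0y : y 0 ∈ Set.Ioo (0:ℝ) 1 := by simpa [hy] using h0
      have := rep_stays a₀ y Q hyd hQd hodey h0y (-τ) (by linarith)
      simpa [hy] using this
  -- the conserved quantity
  set r : ℝ → ℝ := fun t => (1 - x t) / x t * Real.exp (a₀ * R t) with hr
  have hrd : ∀ t, HasDerivAt r 0 t := fun t =>
    rep_r_deriv a₀ x R hx hR hode (ne_of_gt (hpos t).1)
  have hrdiff : Differentiable ℝ r := fun t => (hrd t).differentiableAt
  have hrderiv : ∀ t, deriv r t = 0 := fun t => (hrd t).deriv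
  have hconst : ∀ t, r t = r 0 := fun t =>
    is_const_of_deriv_eq_zero hrdiff hrderiv t 0
  have hr0pos : (0:ℝ) < r 0 := by
    have h2 : 0 < (1 - x 0) / x 0 * Real.exp (a₀ * R 0) :=
      mul_pos (div_pos (by linarith [h0.2]) h0.1) (Real.exp_pos _)
    simpa [hr] using h2
  refine ⟨r 0, hr0pos, ?_⟩
  intro τ
  have h1 : (1 - x τ) / x τ * Real.exp (a₀ * R τ) = r 0 := hconst τ
  have hx0 : x τ ≠ 0 := ne_of_gt (hpos τ).1
  have hden : Real.exp (a₀ * R τ) + r 0 > 0 := by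
    linarith [Real.exp_pos (a₀ * R τ)]
  rw [eq_div_iff (ne_of_gt hden)]
  have h2 : (1 - x τ) * Real.exp (a₀ * R τ) = r 0 * x τ := by
    field_simp at h1
    linarith [h1]
  nlinarith [h2]
end
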